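/- Let s, n, k be positive integers, t a nonnegative integer, G an s-by-n matrix over F_2 and r ∈ F_2^n. Let G' be the (s+1)-by-(n+t) matrix over F_2 whose j-th column, for j ≤ n, is the j-th column of G with the entry r_j appended as last coordinate, and whose last t columns each equal the standard unit vector e_{s+1} of F_2^{s+1}. If G' is a k-PIR generator matrix, then G is a k-PIR generator matrix. -/

import Mathlib

/-- An `s × n` matrix `G` over `𝔽₂` is a `k`-PIR generator matrix if for every
index `i` there exist `k` pairwise disjoint recovery sets of column indices,
each of whose column sums equals the `i`-th standard unit vector. -/
def IsPIRMatrix (s n k : ℕ) (G : Matrix (Fin s) (Fin n) (ZMod 2)) : Prop :=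
  ∀ i : Fin s, ∃ R : Fin k → Finset (Fin n),
    (∀ j j' : Fin k, j ≠ j' → Disjoint (R j) (R j')) ∧
    ∀ j : Fin k, (∑ h ∈ R j, fun r : Fin s => G r h) = Pi.single i 1

/-- `PIRlen s k` is the smallest positive `n` for which an `s × n` `k`-PIR
generator matrix over `𝔽₂` exists. -/
noncomputable def PIRlen (s k : ℕ) : ℕ :=
  sInf {n : ℕ | 0 < n ∧ ∃ G : Matrix (Fin s) (Fin n) (ZMod 2), IsPIRMatrix s n k G}

theorem test : True := trivial

/-- If the lengthened matrix `G'` (obtained from `G` by appending the row `r`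
and `t` copies of the unit column `e_{s+1}`) is a `k`-PIR generator matrix,
then so is `G`. -/
theorem stmt_1 (s n k t : ℕ) (hs : 0 < s) (hn : 0 < n) (hk : 0 < k)
    (G : Matrix (Fin s) (Fin n) (ZMod 2)) (r : Fin n → ZMod 2)
    (G' : Matrix (Fin (s + 1)) (Fin (n + t)) (ZMod 2))
    (hcol : ∀ j : Fin n,
      (fun i : Fin (s + 1) => G' i (Fin.castAdd t j)) =
        Fin.snoc (fun i : Fin s => G i j) (r j))
    (hcol' : ∀ j : Fin t,
      (fun i : Fin (s + 1) => G' i (Fin.natAdd n j)) = Pi.single (Fin.last s) 1)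
    (hG' : IsPIRMatrix (s + 1) (n + t) k G') :
    IsPIRMatrix s n k G := by
  intro i
  obtain ⟨R', hdisj, hsum⟩ := hG' i.castSucc
  refine ⟨fun j => Finset.univ.filter (fun h => Fin.castAdd t h ∈ R' j), ?_, ?_⟩
  · intro j j' hjj'
    rw [Finset.disjoint_left]
    intro h hh hh'
    simp only [Finset.mem_filter] at hh hh'
    exact (Finset.disjoint_left.mp (hdisj j j' hjj')) hh.2 hh'.2
  · intro j
    funext a
    have key := congrFun (hsum j) a.castSucc
    simp only [Finset.sum_apply] at key ⊢
    have h1 : (Pi.single i.castSucc 1 : Fin (s + 1) → ZMod 2) a.castSucc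
        = (Pi.single i 1 : Fin s → ZMod 2) a := by
      by_cases hai : a = i
      · subst hai; simp
      · rw [Pi.single_eq_of_ne (fun h => hai (Fin.castSucc_injective _ h)),
          Pi.single_eq_of_ne hai]
    rw [h1] at key
    rw [← key]
    rw [← Finset.sum_subset
      (Finset.filter_subset (fun h' : Fin (n + t) => (h' : ℕ) < n) (R' j))]
    · refine Finset.sum_bij' (fun h _ => Fin.castAdd t h)
        (fun h' hh' => (⟨(h' : ℕ), (Finset.mem_filter.mp hh').2⟩ : Fin n))
        ?_ ?_ ?_ ?_ ?_
      · intro h hh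
        simp only [Finset.mem_filter] at hh ⊢
        exact ⟨hh.2, by simp [Fin.castAdd]⟩
      · intro h' hh'
        simp only [Finset.mem_filter] at hh' ⊢
        refine ⟨Finset.mem_univ _, ?_⟩
        convert hh'.1
        exact Fin.ext rfl
      · intro h hh
        ext; simp
      · intro h' hh'
        ext; simp
      · intro h hh
        have := congrFun (hcol h) a.castSucc
        beta_reduce at this
        rw [this]
        simp [Fin.snoc_castSucc]
    · intro h' hh' hne
      simp only [Finset.mem_filter, not_and, not_lt] at hne
      have hge : n ≤ (h' : ℕ) := hne hh'
      have : h' = Fin.natAdd n ⟨(h' : ℕ) - n, by omega⟩ := by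
        ext; simp; omega
      rw [this]
      have := congrFun (hcol' ⟨(h' : ℕ) - n, by omega⟩) a.castSucc
      rw [this]
      rw [Pi.single_eq_of_ne (by exact fun h => (Fin.castSucc_lt_last a).ne h)]
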